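/- Let G be a finite group acting smoothly on a smooth manifold M, f : M → ℝ a smooth G-invariant function, x ∈ M, and suppose the isotropy group G_x is nontrivial and some h ∈ G_x acts on T_xM with dh_x ∈ SO(T_xM), dh_x ≠ id. Then df_x lies in the fixed subspace of the transpose action of dh_x on T_x^*M, a subspace of dimension at most dim M − 2. Consequently, for any G-invariant smooth functions f₁, ..., f_p (p = dim M), the exterior product df₁(x) ∧ ... ∧ df_p(x) = 0. -/

import Mathlib

open Manifold RealInnerProductSpace

section Aux

variable {E : Type*} [NormedAddCommGroup E] [InnerProductSpace ℝ E]
  [FiniteDimensional ℝ E]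

/-- Key linear-algebra fact: a norm-preserving endomorphism with determinant one which is
not the identity has fixed subspace of codimension at least two. -/
theorem aux_fixed_codim_two {p : ℕ} (hp : Module.finrank ℝ E = p)
    (D : E →L[ℝ] E) (hDorth : ∀ v : E, ‖D v‖ = ‖v‖)
    (hDdet : LinearMap.det (D : E →ₗ[ℝ] E) = 1)
    (hDne : D ≠ ContinuousLinearMap.id ℝ E) :
    Module.finrank ℝ (LinearMap.ker ((D : E →ₗ[ℝ] E) - LinearMap.id)) ≤ p - 2 := by
  classical
  set Dl : E →ₗ[ℝ] E := (D : E →ₗ[ℝ] E) with hDl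
  set W : Submodule ℝ E := LinearMap.ker (Dl - LinearMap.id) with hW
  have hmemW : ∀ w : E, w ∈ W ↔ Dl w = w := by
    intro w
    rw [hW, LinearMap.mem_ker, LinearMap.sub_apply, LinearMap.id_apply, sub_eq_zero]
  have hfix : ∀ w ∈ W, Dl w = w := fun w hw => (hmemW w).mp hw
  have hinner : ∀ a b : E, ⟪Dl a, Dl b⟫ = ⟪a, b⟫ := fun a b =>
    LinearIsometry.inner_map_map ⟨Dl, hDorth⟩ a b
  have hWperp : ∀ v ∈ Wᗮ, Dl v ∈ Wᗮ := by
    intro v hv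
    rw [Submodule.mem_orthogonal] at hv ⊢
    intro w hw
    calc ⟪w, Dl v⟫ = ⟪Dl w, Dl v⟫ := by rw [hfix w hw]
      _ = ⟪w, v⟫ := hinner w v
      _ = 0 := hv w hw
  have hWne : W ≠ ⊤ := by
    intro htop
    apply hDne
    ext v
    exact hfix v (htop ▸ Submodule.mem_top)
  have hWlt : Module.finrank ℝ W < p := by
    rw [← hp]
    exact Submodule.finrank_lt hWne
  by_contra hcon
  push_neg at hcon
  have hWeq : Module.finrank ℝ W = p - 1 := by omega
  have horth : Module.finrank ℝ W + Module.finrank ℝ Wᗮ = p := by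
    rw [← hp]; exact Submodule.finrank_add_finrank_orthogonal W
  have hperp1 : Module.finrank ℝ Wᗮ = 1 := by omega
  obtain ⟨u, hu0, hu⟩ := finrank_eq_one_iff'.mp hperp1
  have hu0' : (u : E) ≠ 0 := fun h0 => hu0 (Subtype.ext h0)
  have hune : ‖(u : E)‖ ≠ 0 := norm_ne_zero_iff.mpr hu0'
  -- D acts as -1 on Wᗮ
  have hDu : Dl (u : E) = -(u : E) := by
    have hmem : Dl (u : E) ∈ Wᗮ := hWperp _ u.2
    obtain ⟨c, hc⟩ := hu ⟨Dl (u : E), hmem⟩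
    have hcE : c • (u : E) = Dl (u : E) := congrArg Subtype.val hc
    have hnorm : ‖c‖ * ‖(u : E)‖ = ‖(u : E)‖ := by
      rw [← norm_smul, hcE]; exact hDorth (u : E)
    have habs : |c| = 1 := by
      have := mul_right_cancel₀ hune (hnorm.trans (one_mul ‖(u : E)‖).symm)
      rwa [Real.norm_eq_abs] at this
    rcases (abs_eq (by norm_num : (0:ℝ) ≤ 1)).mp habs with h1 | h2
    · exfalso
      rw [h1, one_smul] at hcE
      have huW : (u : E) ∈ W := (hmemW _).mpr hcE.symm
      have h0 : ⟪(u : E), (u : E)⟫ = 0 :=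
        (Submodule.mem_orthogonal W (u : E)).mp u.2 (u : E) huW
      exact hu0' (inner_self_eq_zero.mp h0)
    · rw [h2, neg_one_smul] at hcE
      rw [← hcE]
  have hDperp : ∀ v ∈ Wᗮ, Dl v = -v := by
    intro v hv
    obtain ⟨c, hc⟩ := hu ⟨v, hv⟩
    have hcE : c • (u : E) = v := congrArg Subtype.val hc
    rw [← hcE, map_smul, hDu, smul_neg]
  -- build an adapted basis and compute the determinant
  have hc : IsCompl W Wᗮ := Submodule.isCompl_orthogonal_of_hasOrthogonalProjection
  let e := Submodule.prodEquivOfIsCompl W Wᗮ hc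
  let bW := Module.finBasis ℝ W
  let bO := Module.finBasis ℝ Wᗮ
  let b : Module.Basis (Fin (Module.finrank ℝ W) ⊕ Fin (Module.finrank ℝ Wᗮ)) ℝ E :=
    (bW.prod bO).map e
  let d : (Fin (Module.finrank ℝ W) ⊕ Fin (Module.finrank ℝ Wᗮ)) → ℝ :=
    Sum.elim (fun _ => 1) (fun _ => -1)
  have hbl : ∀ i, b (Sum.inl i) = (bW i : E) := by
    intro i
    simp [b, e, Module.Basis.map_apply, Module.Basis.prod_apply, Submodule.coe_prodEquivOfIsCompl']
  have hbr : ∀ j, b (Sum.inr j) = (bO j : E) := by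
    intro j
    simp [b, e, Module.Basis.map_apply, Module.Basis.prod_apply, Submodule.coe_prodEquivOfIsCompl']
  have hDb : ∀ j, Dl (b j) = d j • b j := by
    rintro (i | j)
    · rw [hbl i]
      simpa [d] using hfix _ (bW i).2
    · rw [hbr j]
      simpa [d] using hDperp _ (bO j).2
  have hmat : LinearMap.toMatrix b b Dl = Matrix.diagonal d := by
    ext i j
    rw [LinearMap.toMatrix_apply, hDb j, map_smul, Module.Basis.repr_self]
    by_cases hij : i = j
    · subst hij; simp [Matrix.diagonal]
    · simp [Matrix.diagonal, hij, Finsupp.single_apply, Ne.symm hij]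
  have hdet : LinearMap.det Dl = -1 := by
    rw [← LinearMap.det_toMatrix b, hmat, Matrix.det_diagonal, Fintype.prod_sum_type]
    simp [d, hperp1]
  rw [hdet] at hDdet
  norm_num at hDdet

end Aux

set_option maxHeartbeats 2000000 in
/-- At a singular point whose isotropy contains a nontrivial rotation, the
differential of any invariant function is constrained to a subspace of codimension
at least two, and hence the differentials of `p = dim M` invariant functions have
vanishing exterior product. -/
theorem invariant_differentials_wedge_vanishes_at_singular_point
    {E : Type*} [NormedAddCommGroup E] [InnerProductSpace ℝ E]
    [FiniteDimensional ℝ E]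
    {H : Type*} [TopologicalSpace H] (I : ModelWithCorners ℝ E H)
    {M : Type*} [TopologicalSpace M] [ChartedSpace H M]
    [IsManifold I (⊤ : ℕ∞) M]
    (p : ℕ) (hp : Module.finrank ℝ E = p)
    (G : Type*) [Group G] [Finite G] [MulAction G M]
    (hsmooth : ∀ g : G, ContMDiff I I (⊤ : ℕ∞) fun y : M => g • y)
    (x : M) (h : G) (hx : h • x = x) (hone : h ≠ 1)
    (D : E →L[ℝ] E)
    (hD : D = (hx ▸ mfderiv I I (fun y : M => h • y) x :
      TangentSpace I x →L[ℝ] TangentSpace I x))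
    (hDorth : ∀ v : E, ‖D v‖ = ‖v‖)
    (hDdet : LinearMap.det (D : E →ₗ[ℝ] E) = 1)
    (hDne : D ≠ ContinuousLinearMap.id ℝ E) :
    (∀ f : M → ℝ, ContMDiff I 𝓘(ℝ, ℝ) (⊤ : ℕ∞) f → (∀ (g : G) (y : M), f (g • y) = f y) →
      ((mfderiv I 𝓘(ℝ, ℝ) f x : E →L[ℝ] ℝ).toLinearMap).comp (D : E →ₗ[ℝ] E)
        = (mfderiv I 𝓘(ℝ, ℝ) f x : E →L[ℝ] ℝ).toLinearMap) ∧
    (Module.finrank ℝ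
        (LinearMap.ker ((D : E →ₗ[ℝ] E).dualMap - LinearMap.id)) ≤ p - 2) ∧
    (∀ f : Fin p → M → ℝ, (∀ i, ContMDiff I 𝓘(ℝ, ℝ) (⊤ : ℕ∞) (f i)) →
      (∀ i (g : G) (y : M), f i (g • y) = f i y) →
      (List.ofFn (fun i =>
          (ExteriorAlgebra.ι ℝ :
              Module.Dual ℝ E →ₗ[ℝ] ExteriorAlgebra ℝ (Module.Dual ℝ E))
            (mfderiv I 𝓘(ℝ, ℝ) (f i) x : E →L[ℝ] ℝ).toLinearMap)).prod = 0) := by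
  classical
  have hDm : (D : E →L[ℝ] E) = (mfderiv I I (fun y : M => h • y) x : E →L[ℝ] E) := by
    rw [hD]; exact eq_rec_constant _ hx
  -- Part 1
  have key1 : ∀ f : M → ℝ, ContMDiff I 𝓘(ℝ, ℝ) (⊤ : ℕ∞) f → (∀ (g : G) (y : M), f (g • y) = f y) →
      ((mfderiv I 𝓘(ℝ, ℝ) f x : E →L[ℝ] ℝ).toLinearMap).comp (D : E →ₗ[ℝ] E)
        = (mfderiv I 𝓘(ℝ, ℝ) f x : E →L[ℝ] ℝ).toLinearMap := by
    intro f hf hfi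
    have hcomp : f ∘ (fun y : M => h • y) = f := funext fun y => hfi h y
    have h1 : mfderiv I 𝓘(ℝ, ℝ) (f ∘ fun y : M => h • y) x
        = (mfderiv I 𝓘(ℝ, ℝ) f (h • x)).comp (mfderiv I I (fun y : M => h • y) x) :=
      mfderiv_comp x (hf.mdifferentiableAt (by simp)) ((hsmooth h).mdifferentiableAt (by simp))
    rw [hcomp] at h1
    let F : M → (E →L[ℝ] ℝ) := fun y => mfderiv I 𝓘(ℝ, ℝ) f y
    have hpt : (mfderiv I 𝓘(ℝ, ℝ) f (h • x) : E →L[ℝ] ℝ)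
        = (mfderiv I 𝓘(ℝ, ℝ) f x : E →L[ℝ] ℝ) := congrArg F hx
    apply LinearMap.ext
    intro v
    have h2 : (mfderiv I 𝓘(ℝ, ℝ) f x : E →L[ℝ] ℝ) v
        = (mfderiv I 𝓘(ℝ, ℝ) f (h • x) : E →L[ℝ] ℝ)
            ((mfderiv I I (fun y : M => h • y) x : E →L[ℝ] E) v) :=
      DFunLike.congr_fun h1 v
    rw [hpt, ← hDm] at h2
    exact h2.symm
  refine ⟨key1, ?_, ?_⟩
  · -- Part 2
    have hker := aux_fixed_codim_two hp D hDorth hDdet hDne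
    have hdm : (D : E →ₗ[ℝ] E).dualMap - LinearMap.id
        = ((D : E →ₗ[ℝ] E) - LinearMap.id).dualMap := by
      ext g v
      simp [LinearMap.dualMap_apply, map_sub]
    rw [hdm, LinearMap.ker_dualMap_eq_dualAnnihilator_range]
    have e1 : Module.finrank ℝ (LinearMap.range ((D : E →ₗ[ℝ] E) - LinearMap.id)).dualAnnihilator
        = Module.finrank ℝ (E ⧸ LinearMap.range ((D : E →ₗ[ℝ] E) - LinearMap.id)) :=
      (LinearEquiv.finrank_eq (Subspace.quotEquivAnnihilator _)).symm
    have e2 : Module.finrank ℝ (E ⧸ LinearMap.range ((D : E →ₗ[ℝ] E) - LinearMap.id))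
        + Module.finrank ℝ (LinearMap.range ((D : E →ₗ[ℝ] E) - LinearMap.id)) = p := by
      rw [← hp]; exact Submodule.finrank_quotient_add_finrank _
    have e3 : Module.finrank ℝ (LinearMap.range ((D : E →ₗ[ℝ] E) - LinearMap.id))
        + Module.finrank ℝ (LinearMap.ker ((D : E →ₗ[ℝ] E) - LinearMap.id)) = p := by
      rw [← hp]; exact LinearMap.finrank_range_add_finrank_ker _
    omega
  · -- Part 3
    intro f hfs hfinv
    have hker := aux_fixed_codim_two hp D hDorth hDdet hDne
    have hSle : Module.finrank ℝ
        (LinearMap.ker ((D : E →ₗ[ℝ] E).dualMap - LinearMap.id)) ≤ p - 2 := by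
      have hdm : (D : E →ₗ[ℝ] E).dualMap - LinearMap.id
          = ((D : E →ₗ[ℝ] E) - LinearMap.id).dualMap := by
        ext g v
        simp [LinearMap.dualMap_apply, map_sub]
      rw [hdm, LinearMap.ker_dualMap_eq_dualAnnihilator_range]
      have e1 : Module.finrank ℝ
          (LinearMap.range ((D : E →ₗ[ℝ] E) - LinearMap.id)).dualAnnihilator
          = Module.finrank ℝ (E ⧸ LinearMap.range ((D : E →ₗ[ℝ] E) - LinearMap.id)) :=
        (LinearEquiv.finrank_eq (Subspace.quotEquivAnnihilator _)).symm
      have e2 : Module.finrank ℝ (E ⧸ LinearMap.range ((D : E →ₗ[ℝ] E) - LinearMap.id))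
          + Module.finrank ℝ (LinearMap.range ((D : E →ₗ[ℝ] E) - LinearMap.id)) = p := by
        rw [← hp]; exact Submodule.finrank_quotient_add_finrank _
      have e3 : Module.finrank ℝ (LinearMap.range ((D : E →ₗ[ℝ] E) - LinearMap.id))
          + Module.finrank ℝ (LinearMap.ker ((D : E →ₗ[ℝ] E) - LinearMap.id)) = p := by
        rw [← hp]; exact LinearMap.finrank_range_add_finrank_ker _
      omega
    have hp1 : 1 ≤ p := by
      have hWne : LinearMap.ker ((D : E →ₗ[ℝ] E) - LinearMap.id) ≠ ⊤ := by
        intro htop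
        apply hDne
        ext v
        have hv : v ∈ LinearMap.ker ((D : E →ₗ[ℝ] E) - LinearMap.id) :=
          htop ▸ Submodule.mem_top
        have := LinearMap.mem_ker.mp hv
        rw [LinearMap.sub_apply, LinearMap.id_apply, sub_eq_zero] at this
        exact this
      have := Submodule.finrank_lt (K := ℝ) (V := E) hWne
      omega
    set S : Submodule ℝ (Module.Dual ℝ E) :=
      LinearMap.ker ((D : E →ₗ[ℝ] E).dualMap - LinearMap.id) with hS
    set g : Fin p → Module.Dual ℝ E :=
      fun i => (mfderiv I 𝓘(ℝ, ℝ) (f i) x : E →L[ℝ] ℝ).toLinearMap with hg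
    have hgS : ∀ i, g i ∈ S := by
      intro i
      rw [hS, LinearMap.mem_ker, LinearMap.sub_apply, LinearMap.id_apply, sub_eq_zero]
      exact key1 (f i) (hfs i) (hfinv i)
    have hdep : ¬ LinearIndependent ℝ g := by
      intro hli
      have hspan : Submodule.span ℝ (Set.range g) ≤ S :=
        Submodule.span_le.mpr (by rintro _ ⟨i, rfl⟩; exact hgS i)
      have hmono := Submodule.finrank_mono hspan
      have hcard : Module.finrank ℝ (Submodule.span ℝ (Set.range g)) = p := by
        rw [finrank_span_eq_card hli, Fintype.card_fin]
      omega
    haveI : NoZeroSMulDivisors ℝ (ExteriorAlgebra ℝ (Module.Dual ℝ E)) :=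
      GroupWithZero.toNoZeroSMulDivisors
    have hzero := (ExteriorAlgebra.ιMulti ℝ p (M := Module.Dual ℝ E)).map_linearDependent g hdep
    rw [ExteriorAlgebra.ιMulti_apply] at hzero
    exact hzero
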